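/- arXiv:0705.0468 — 2 statements merged into one kernel-verified Lean document; each statement's English description precedes it below -/
import Mathlib

section
/- If p1, p2, p3, p4 > 0, then η1 > 0, η2 > 0, and 1 - η1 - η2 = (p1 p4 - p2 p3)² / ((p1+p2)(p3+p4)(p1+p3)(p2+p4)). In particular η1 + η2 ≤ 1, with equality if and only if p1 p4 = p2 p3; hence for p1 p4 ≠ p2 p3 the trinomial weight b2(x, y, N; η1, η2) is a probability distribution on {(x, y) ∈ ℤ≥0² : x + y ≤ N} with all weights strictly positive. -/
open Finset

/-- The binomial distribution `b(k, n; α) = C(n,k) α^k (1-α)^(n-k)`. -/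
noncomputable def binomPMF (n k : ℕ) (α : ℝ) : ℝ :=
  (n.choose k : ℝ) * α ^ k * (1 - α) ^ (n - k)

/-- The trinomial distribution
`b₂(i₁, i₂, n; β₁, β₂) = (n!/(i₁! i₂! (n-i₁-i₂)!)) β₁^{i₁} β₂^{i₂} (1-β₁-β₂)^{n-i₁-i₂}`. -/
noncomputable def trinomPMF (n i1 i2 : ℕ) (β1 β2 : ℝ) : ℝ :=
  ((n.factorial : ℝ) /
      ((i1.factorial : ℝ) * (i2.factorial : ℝ) * ((n - i1 - i2).factorial : ℝ))) *
    β1 ^ i1 * β2 ^ i2 * (1 - β1 - β2) ^ (n - i1 - i2)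

/-- The Hoare–Rahman kernel `K(j₁, j₂; i₁, i₂)`. -/
noncomputable def HRkernel (N : ℕ) (α1 α2 β1 β2 : ℝ) (j1 j2 i1 i2 : ℕ) : ℝ :=
  ∑ k1 ∈ range (min i1 j1 + 1), ∑ k2 ∈ range (min i2 j2 + 1),
    binomPMF i1 k1 α1 * binomPMF i2 k2 α2 *
      trinomPMF (N - k1 - k2) (j1 - k1) (j2 - k2) β1 β2


lemma coeff_eq (N x y : ℕ) (h : x + y ≤ N) :
    (N.factorial : ℝ) / ((x.factorial : ℝ) * (y.factorial : ℝ) * ((N - x - y).factorial : ℝ)) =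
    (N.choose x : ℝ) * ((N - x).choose y : ℝ) := by
  have hx : x ≤ N := le_trans (Nat.le_add_right _ _) h
  have hy : y ≤ N - x := by omega
  have e1 := Nat.choose_mul_factorial_mul_factorial hx
  have e2 := Nat.choose_mul_factorial_mul_factorial hy
  have hnat : N.choose x * (N - x).choose y *
      (x.factorial * y.factorial * (N - x - y).factorial) = N.factorial := by
    calc N.choose x * (N - x).choose y * (x.factorial * y.factorial * (N - x - y).factorial)
        = (N.choose x * x.factorial) * ((N - x).choose y * y.factorial * ((N - x) - y).factorial) := by
          ring_nf
      _ = (N.choose x * x.factorial) * (N - x).factorial := by rw [e2]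
      _ = N.factorial := e1
  have hf : ∀ m : ℕ, (0:ℝ) < (m.factorial : ℝ) := fun m => by exact_mod_cast m.factorial_pos
  rw [div_eq_iff (by have := hf x; have := hf y; have := hf (N - x - y); positivity)]
  exact_mod_cast hnat.symm

lemma tri_sum (N : ℕ) (a b : ℝ) :
    ∑ x ∈ range (N + 1), ∑ y ∈ range (N + 1 - x), trinomPMF N x y a b = 1 := by
  have key : ∀ x ∈ range (N + 1), ∑ y ∈ range (N + 1 - x), trinomPMF N x y a b
      = (N.choose x : ℝ) * a ^ x * (b + (1 - a - b)) ^ (N - x) := by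
    intro x hx
    simp only [mem_range] at hx
    have hxN : x ≤ N := by omega
    have h1 : N + 1 - x = (N - x) + 1 := by omega
    rw [h1, add_pow, Finset.mul_sum]
    apply sum_congr rfl
    intro y hy
    simp only [mem_range] at hy
    have hxy : x + y ≤ N := by omega
    rw [trinomPMF, coeff_eq N x y hxy]
    ring
  rw [sum_congr rfl key]
  have expand : (a + (1 - a)) ^ N
      = ∑ x ∈ range (N + 1), (N.choose x : ℝ) * a ^ x * (b + (1 - a - b)) ^ (N - x) := by
    rw [add_pow]
    apply sum_congr rfl
    intro k _
    have hb : b + (1 - a - b) = 1 - a := by ring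
    rw [hb]; ring
  rw [← expand]
  norm_num

/-- positivity of `η₁, η₂`, the closed form of `1 - η₁ - η₂`, the
inequality `η₁ + η₂ ≤ 1` with equality iff `p₁p₄ = p₂p₃`, and that for
`p₁p₄ ≠ p₂p₃` the trinomial weight is a probability distribution with all
weights strictly positive. -/
theorem eta_properties (p1 p2 p3 p4 : ℝ)
    (h1 : 0 < p1) (h2 : 0 < p2) (h3 : 0 < p3) (h4 : 0 < p4)
    (η1 η2 : ℝ)
    (hη1 : η1 = p1 * p2 * (p1 + p2 + p3 + p4) / ((p1 + p2) * (p1 + p3) * (p2 + p4)))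
    (hη2 : η2 = p3 * p4 * (p1 + p2 + p3 + p4) / ((p1 + p3) * (p2 + p4) * (p3 + p4))) :
    0 < η1 ∧ 0 < η2 ∧
      1 - η1 - η2 =
        (p1 * p4 - p2 * p3) ^ 2 / ((p1 + p2) * (p3 + p4) * (p1 + p3) * (p2 + p4)) ∧
      η1 + η2 ≤ 1 ∧
      (η1 + η2 = 1 ↔ p1 * p4 = p2 * p3) ∧
      (p1 * p4 ≠ p2 * p3 → ∀ N : ℕ,
        (∀ x y : ℕ, x + y ≤ N → 0 < trinomPMF N x y η1 η2) ∧
        (∑ x ∈ range (N + 1), ∑ y ∈ range (N + 1 - x), trinomPMF N x y η1 η2) = 1) := by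
  have hS : 0 < p1 + p2 + p3 + p4 := by linarith
  have h12 : 0 < p1 + p2 := by linarith
  have h13 : 0 < p1 + p3 := by linarith
  have h24 : 0 < p2 + p4 := by linarith
  have h34 : 0 < p3 + p4 := by linarith
  have hD : 0 < (p1 + p2) * (p3 + p4) * (p1 + p3) * (p2 + p4) :=
    mul_pos (mul_pos (mul_pos h12 h34) h13) h24
  have hη1pos : 0 < η1 := by
    rw [hη1]
    exact div_pos (mul_pos (mul_pos h1 h2) hS) (mul_pos (mul_pos h12 h13) h24)
  have hη2pos : 0 < η2 := by
    rw [hη2]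
    exact div_pos (mul_pos (mul_pos h3 h4) hS) (mul_pos (mul_pos h13 h24) h34)
  have hkey : 1 - η1 - η2 =
      (p1 * p4 - p2 * p3) ^ 2 / ((p1 + p2) * (p3 + p4) * (p1 + p3) * (p2 + p4)) := by
    rw [hη1, hη2]
    field_simp
    ring
  have hle : η1 + η2 ≤ 1 := by
    have := div_nonneg (sq_nonneg (p1 * p4 - p2 * p3)) hD.le
    linarith [hkey]
  refine ⟨hη1pos, hη2pos, hkey, hle, ?_, ?_⟩
  · constructor
    · intro heq
      have hz : (p1 * p4 - p2 * p3) ^ 2 / ((p1 + p2) * (p3 + p4) * (p1 + p3) * (p2 + p4)) = 0 := by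
        linarith [hkey]
      have hz2 : (p1 * p4 - p2 * p3) ^ 2 = 0 := by
        rcases div_eq_zero_iff.mp hz with h | h
        · exact h
        · exact absurd h hD.ne'
      have := pow_eq_zero_iff (n := 2) (by norm_num) |>.mp hz2
      linarith [this]
    · intro heq
      have : (p1 * p4 - p2 * p3) ^ 2 = 0 := by
        rw [sub_eq_zero.mpr heq]; ring
      rw [this, zero_div] at hkey
      linarith
  · intro hne N
    have hsq : 0 < (p1 * p4 - p2 * p3) ^ 2 := by
      have hne' : p1 * p4 - p2 * p3 ≠ 0 := sub_ne_zero.mpr hne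
      positivity
    constructor
    · intro x y hxy
      have hc : 0 < 1 - η1 - η2 := by
        rw [hkey]
        exact div_pos hsq hD
      have hf : ∀ m : ℕ, (0:ℝ) < (m.factorial : ℝ) := fun m => by exact_mod_cast m.factorial_pos
      have hcoef : 0 < (N.factorial : ℝ) /
          ((x.factorial : ℝ) * (y.factorial : ℝ) * ((N - x - y).factorial : ℝ)) :=
        div_pos (hf N) (mul_pos (mul_pos (hf x) (hf y)) (hf (N - x - y)))
      exact mul_pos (mul_pos (mul_pos hcoef (pow_pos hη1pos x)) (pow_pos hη2pos y))
        (pow_pos hc (N - x - y))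
    · exact tri_sum N η1 η2
end

section
/- Let p1, p2, p3, p4 > 0 with p1 p4 ≠ p2 p3, let N ≥ 1 be an integer, and let t, u, v, w, η1, η2 be the associated parameters. Then the Rahman polynomials are orthogonal with respect to the trinomial distribution: for all nonnegative integers m, n, m', n' with m + n ≤ N, m' + n' ≤ N and (m, n) ≠ (m', n'), one has Σ_{x, y ≥ 0, x + y ≤ N} b2(x, y, N; η1, η2) P_{m,n}(x, y) P_{m',n'}(x, y) = 0. -/
open Finset

/-- The Pochhammer symbol `(a)_r = a (a+1) ⋯ (a+r-1)`. -/
noncomputable def poch (a : ℝ) (r : ℕ) : ℝ := ∏ s ∈ range r, (a + s)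

/-- The Rahman polynomial `P_{m,n}(x,y)`, summed over `i+j ≤ m`, `k+ℓ ≤ n`. -/
noncomputable def rahmanP (N : ℕ) (t u v w : ℝ) (m n x y : ℕ) : ℝ :=
  ∑ i ∈ range (m + 1), ∑ j ∈ range (m + 1 - i),
    ∑ k ∈ range (n + 1), ∑ l ∈ range (n + 1 - k),
      poch (-(m : ℝ)) (i + j) * poch (-(n : ℝ)) (k + l) *
          poch (-(x : ℝ)) (i + k) * poch (-(y : ℝ)) (j + l) /
        ((i.factorial : ℝ) * (j.factorial : ℝ) * (k.factorial : ℝ) * (l.factorial : ℝ) *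
          poch (-(N : ℝ)) (i + j + k + l)) *
        t ^ i * u ^ j * v ^ k * w ^ l

lemma poch_succ (a : ℝ) (r : ℕ) : poch a (r+1) = poch a r * (a + r) := by
  simp [poch, Finset.prod_range_succ]

lemma poch_eq_zero {m r : ℕ} (h : m < r) : poch (-(m:ℝ)) r = 0 := by
  apply Finset.prod_eq_zero (Finset.mem_range.2 h)
  simp

lemma poch_mul_fact {r m : ℕ} (h : r ≤ m) :
    poch (-(m:ℝ)) r * ((m-r).factorial : ℝ) = (-1)^r * (m.factorial : ℝ) := by
  induction r with
  | zero => simp [poch]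
  | succ r ih =>
      have hr : r ≤ m := by omega
      have ih' := ih hr
      have hf : ((m - r).factorial : ℝ) = ((m - r : ℕ) : ℝ) * ((m - (r+1)).factorial : ℝ) := by
        rw [show m - r = (m - (r+1)) + 1 by omega, Nat.factorial_succ]
        push_cast
        ring
      have hc : (-(m:ℝ) + r) = -(((m - r : ℕ) : ℝ)) := by
        rw [Nat.cast_sub hr]; ring
      rw [poch_succ, hc]
      rw [hf] at ih'
      linear_combination -ih'

lemma poch_ne_zero {r m : ℕ} (h : r ≤ m) : poch (-(m:ℝ)) r ≠ 0 := by
  intro h0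
  have := poch_mul_fact h
  rw [h0, zero_mul] at this
  have h1 : ((m.factorial : ℝ)) ≠ 0 := Nat.cast_ne_zero.2 m.factorial_pos.ne'
  have h2 : ((-1:ℝ))^r ≠ 0 := by positivity
  exact (mul_ne_zero h2 h1) this.symm

lemma poch_eq {r m : ℕ} (h : r ≤ m) :
    poch (-(m:ℝ)) r = (-1)^r * (m.factorial : ℝ) / ((m-r).factorial : ℝ) := by
  have := poch_mul_fact h
  field_simp
  linarith [this]

noncomputable def tc (M i j : ℕ) : ℝ :=
  (M.factorial : ℝ) / ((i.factorial : ℝ) * (j.factorial : ℝ) * ((M - i - j).factorial : ℝ))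

lemma tc_pos (M i j : ℕ) : 0 < tc M i j := by
  unfold tc
  have := M.factorial_pos
  positivity

lemma tc_eq_choose {M i j : ℕ} (h : i + j ≤ M) :
    tc M i j = (M.choose i : ℝ) * ((M-i).choose j : ℝ) := by
  have hi : i ≤ M := by omega
  have hj : j ≤ M - i := by omega
  have h1 := Nat.choose_mul_factorial_mul_factorial hi
  have h2 := Nat.choose_mul_factorial_mul_factorial hj
  have key : (M.choose i) * ((M-i).choose j) * (i.factorial * j.factorial * (M-i-j).factorial)
      = M.factorial := by
    calc M.choose i * ((M-i).choose j) * (i.factorial * j.factorial * (M-i-j).factorial)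
        = (M.choose i * i.factorial) * ((M-i).choose j * j.factorial * ((M-i)-j).factorial) := by
          ring
      _ = (M.choose i * i.factorial) * (M-i).factorial := by rw [h2]
      _ = M.factorial := by rw [← h1]
  unfold tc
  have hfi : ((i.factorial : ℝ)) ≠ 0 := Nat.cast_ne_zero.2 i.factorial_pos.ne'
  have hfj : ((j.factorial : ℝ)) ≠ 0 := Nat.cast_ne_zero.2 j.factorial_pos.ne'
  have hfij : (((M-i-j).factorial : ℝ)) ≠ 0 := Nat.cast_ne_zero.2 (M-i-j).factorial_pos.ne'
  have keyR : ((M.choose i : ℝ)) * (((M-i).choose j : ℝ)) *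
      ((i.factorial : ℝ) * (j.factorial : ℝ) * ((M-i-j).factorial : ℝ)) = (M.factorial : ℝ) := by
    exact_mod_cast key
  field_simp
  linear_combination -keyR

lemma trinom_thm (M : ℕ) (a b c : ℝ) :
    ∑ i ∈ range (M+1), ∑ j ∈ range (M+1-i), tc M i j * a^i * b^j * c^(M-i-j)
      = (a + b + c)^M := by
  rw [show a + b + c = a + (b + c) by ring, add_pow]
  apply Finset.sum_congr rfl
  intro i hi
  have hi' : i ≤ M := by simpa [Nat.lt_succ_iff] using hi
  rw [add_pow, Finset.mul_sum, Finset.sum_mul]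
  rw [show M + 1 - i = M - i + 1 by omega]
  apply Finset.sum_congr rfl
  intro j hj
  have hj' : j ≤ M - i := by simpa [Nat.lt_succ_iff] using hj
  rw [tc_eq_choose (by omega : i + j ≤ M)]
  rw [show M - i - j = (M - i) - j from rfl]
  push_cast
  ring

lemma tri_sq {M K K' : ℕ} (hK : M ≤ K) (hK' : M ≤ K') (f : ℕ → ℕ → ℝ) :
    ∑ m ∈ range (K+1), ∑ n ∈ range (K'+1), (if m + n ≤ M then f m n else 0)
      = ∑ m ∈ range (M+1), ∑ n ∈ range (M+1-m), f m n := by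
  rw [← Finset.sum_subset (Finset.range_subset_range.2 (by omega : M+1 ≤ K+1))]
  · apply Finset.sum_congr rfl
    intro m hm
    have hm' : m ≤ M := by simpa [Nat.lt_succ_iff] using hm
    rw [← Finset.sum_subset (Finset.range_subset_range.2 (by omega : M+1-m ≤ K'+1))]
    · apply Finset.sum_congr rfl
      intro n hn
      have hn' : n < M + 1 - m := Finset.mem_range.1 hn
      rw [if_pos (by omega)]
    · intro n _ hn
      have : ¬ n < M + 1 - m := fun hc => hn (Finset.mem_range.2 hc)
      rw [if_neg (by omega)]
  · intro m _ hm
    have : ¬ m < M + 1 := fun hc => hm (Finset.mem_range.2 hc)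
    apply Finset.sum_eq_zero
    intro n _
    rw [if_neg (by omega)]

lemma sum_range_shift {a K : ℕ} (ha : a ≤ K) (g : ℕ → ℝ) (hg : ∀ i < a, g i = 0) :
    ∑ i ∈ range (K+1), g i = ∑ i ∈ range (K+1-a), g (i+a) := by
  have h1 : ∑ i ∈ range (K+1), g i = ∑ i ∈ Finset.Ico a (K+1), g i := by
    rw [Finset.range_eq_Ico]
    rw [← Finset.sum_Ico_consecutive _ (Nat.zero_le a) (by omega : a ≤ K+1)]
    have : ∑ i ∈ Finset.Ico 0 a, g i = 0 := by
      apply Finset.sum_eq_zero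
      intro i hi
      exact hg i (Finset.mem_Ico.1 hi).2
    rw [this, zero_add]
  rw [h1, Finset.sum_Ico_eq_sum_range]
  rw [show K + 1 - a = K + 1 - a from rfl]
  apply Finset.sum_congr rfl
  intro i _
  rw [add_comm a i]

lemma T_zero {N a b : ℕ} (hab : N < a + b) (σ τ : ℝ) :
    ∑ m ∈ range (N+1), ∑ n ∈ range (N+1-m),
      tc N m n * poch (-(m:ℝ)) a * poch (-(n:ℝ)) b * σ^m * τ^n = 0 := by
  apply Finset.sum_eq_zero
  intro m hm
  apply Finset.sum_eq_zero
  intro n hn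
  have hm' : m ≤ N := by simpa [Nat.lt_succ_iff] using hm
  have hn' : n < N + 1 - m := Finset.mem_range.1 hn
  rcases lt_or_ge m a with hma | hma
  · rw [poch_eq_zero hma]; ring
  · have : n < b := by omega
    rw [poch_eq_zero this]; ring

lemma T_eval {N a b : ℕ} (hab : a + b ≤ N) (σ τ : ℝ) :
    ∑ m ∈ range (N+1), ∑ n ∈ range (N+1-m),
      tc N m n * poch (-(m:ℝ)) a * poch (-(n:ℝ)) b * σ^m * τ^n
    = poch (-(N:ℝ)) (a+b) * σ^a * τ^b * (1+σ+τ)^(N-a-b) := by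
  have ha : a ≤ N := by omega
  have hb : b ≤ N := by omega
  set f : ℕ → ℕ → ℝ := fun m n => tc N m n * poch (-(m:ℝ)) a * poch (-(n:ℝ)) b * σ^m * τ^n with hf
  have hfa : ∀ m n, m < a → f m n = 0 := by
    intro m n hma; simp only [hf]; rw [poch_eq_zero hma]; ring
  have hfb : ∀ m n, n < b → f m n = 0 := by
    intro m n hnb; simp only [hf]; rw [poch_eq_zero hnb]; ring
  -- triangle → guarded square
  rw [← tri_sq (le_refl N) (le_refl N) f]
  -- shift the m variable
  rw [sum_range_shift ha (fun m => ∑ n ∈ range (N+1), (if m + n ≤ N then f m n else 0))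
      (by intro m hma; apply Finset.sum_eq_zero; intro n _
          split_ifs with hc
          · exact hfa m n hma
          · rfl)]
  -- shift the n variable in each inner sum
  have hstep : ∀ m, ∑ n ∈ range (N+1), (if (m+a) + n ≤ N then f (m+a) n else 0)
      = ∑ n ∈ range (N+1-b), (if (m+a) + (n+b) ≤ N then f (m+a) (n+b) else 0) := by
    intro m
    exact sum_range_shift hb _ (by
      intro n hnb
      split_ifs with hc
      · exact hfb (m+a) n hnb
      · rfl)
  rw [Finset.sum_congr rfl (fun m _ => hstep m)]
  -- guarded square (over smaller square) → triangle for M = N - a - b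
  have hM : N - a - b ≤ N - a := by omega
  have hM' : N - a - b ≤ N - b := by omega
  have hg : ∀ m n, ((m+a) + (n+b) ≤ N) = (m + n ≤ N - a - b) := by
    intro m n; apply propext; constructor <;> (intro; omega)
  have hcongr : ∀ m ∈ range (N+1-a), ∑ n ∈ range (N+1-b), (if (m+a) + (n+b) ≤ N then f (m+a) (n+b) else 0)
      = ∑ n ∈ range ((N-b)+1), (if m + n ≤ N - a - b then f (m+a) (n+b) else 0) := by
    intro m _
    rw [show N+1-b = (N-b)+1 by omega]
    apply Finset.sum_congr rfl
    intro n _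
    exact if_congr (by omega) rfl rfl
  rw [Finset.sum_congr rfl hcongr, show N+1-a = (N-a)+1 by omega]
  rw [tri_sq hM hM' (fun m n => f (m+a) (n+b))]
  -- now evaluate pointwise and compare with trinomial expansion of RHS
  have hrhs : (1+σ+τ)^(N-a-b) = ∑ i ∈ range ((N-a-b)+1), ∑ j ∈ range ((N-a-b)+1-i),
      tc (N-a-b) i j * σ^i * τ^j * (1:ℝ)^(N-a-b-i-j) := by
    rw [trinom_thm (N-a-b) σ τ 1, show σ + τ + 1 = 1 + σ + τ by ring]
  rw [hrhs, Finset.mul_sum]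
  apply Finset.sum_congr rfl
  intro i hi
  rw [Finset.mul_sum]
  apply Finset.sum_congr rfl
  intro j hj
  have hi' : i ≤ N - a - b := by simpa [Nat.lt_succ_iff] using hi
  have hj' : j ≤ N - a - b - i := by
    have := Finset.mem_range.1 hj; omega
  -- pointwise identity
  simp only [hf]
  rw [poch_eq (show a ≤ i + a by omega), poch_eq (show b ≤ j + b by omega),
      poch_eq (show a + b ≤ N from hab)]
  unfold tc
  rw [show (i+a) - a = i by omega, show (j+b) - b = j by omega,
      show N - (i+a) - (j+b) = (N-a-b) - i - j by omega,
      show N - (a+b) = N - a - b by omega]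
  have e1 : ((i.factorial : ℝ)) ≠ 0 := Nat.cast_ne_zero.2 i.factorial_pos.ne'
  have e2 : ((j.factorial : ℝ)) ≠ 0 := Nat.cast_ne_zero.2 j.factorial_pos.ne'
  have e3 : (((i+a).factorial : ℝ)) ≠ 0 := Nat.cast_ne_zero.2 (i+a).factorial_pos.ne'
  have e4 : (((j+b).factorial : ℝ)) ≠ 0 := Nat.cast_ne_zero.2 (j+b).factorial_pos.ne'
  have e5 : (((N-a-b).factorial : ℝ)) ≠ 0 := Nat.cast_ne_zero.2 (N-a-b).factorial_pos.ne'
  have e6 : ((((N-a-b)-i-j).factorial : ℝ)) ≠ 0 := Nat.cast_ne_zero.2 ((N-a-b)-i-j).factorial_pos.ne'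
  have e7 : ((N.factorial : ℝ)) ≠ 0 := Nat.cast_ne_zero.2 N.factorial_pos.ne'
  rw [pow_add σ i a, pow_add τ j b, one_pow]
  field_simp
  ring

lemma sq_of_tri {M K : ℕ} (hK : M ≤ K) (f : ℕ → ℕ → ℝ) (hzero : ∀ i j, M < i + j → f i j = 0) :
    ∑ i ∈ range (M+1), ∑ j ∈ range (M+1-i), f i j
      = ∑ i ∈ range (K+1), ∑ j ∈ range (K+1), f i j := by
  rw [← tri_sq hK hK f]
  apply Finset.sum_congr rfl
  intro i _
  apply Finset.sum_congr rfl
  intro j _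
  split_ifs with h
  · rfl
  · exact (hzero i j (by omega)).symm

lemma sum_comm5 {α : Type*} (S : Finset α) (r1 r2 r3 r4 : Finset ℕ) (F : α → ℕ → ℕ → ℕ → ℕ → ℝ) :
    ∑ p ∈ S, ∑ i ∈ r1, ∑ j ∈ r2, ∑ k ∈ r3, ∑ l ∈ r4, F p i j k l
      = ∑ i ∈ r1, ∑ j ∈ r2, ∑ k ∈ r3, ∑ l ∈ r4, ∑ p ∈ S, F p i j k l := by
  rw [Finset.sum_comm]
  refine Finset.sum_congr rfl fun i _ => ?_
  rw [Finset.sum_comm]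
  refine Finset.sum_congr rfl fun j _ => ?_
  rw [Finset.sum_comm]
  refine Finset.sum_congr rfl fun k _ => ?_
  rw [Finset.sum_comm]

noncomputable def rterm (N : ℕ) (t u v w : ℝ) (m n x y i j k l : ℕ) : ℝ :=
  poch (-(m : ℝ)) (i + j) * poch (-(n : ℝ)) (k + l) *
      poch (-(x : ℝ)) (i + k) * poch (-(y : ℝ)) (j + l) /
    ((i.factorial : ℝ) * (j.factorial : ℝ) * (k.factorial : ℝ) * (l.factorial : ℝ) *
      poch (-(N : ℝ)) (i + j + k + l)) *
    t ^ i * u ^ j * v ^ k * w ^ l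

lemma rterm_zero_left {N : ℕ} {t u v w : ℝ} {m n x y i j k l : ℕ} (h : m < i + j) :
    rterm N t u v w m n x y i j k l = 0 := by
  unfold rterm
  rw [poch_eq_zero h]
  ring

lemma rterm_zero_right {N : ℕ} {t u v w : ℝ} {m n x y i j k l : ℕ} (h : n < k + l) :
    rterm N t u v w m n x y i j k l = 0 := by
  unfold rterm
  rw [poch_eq_zero h]
  ring

lemma rahman_ext (N : ℕ) (t u v w : ℝ) {m n : ℕ} (x y : ℕ) (hm : m ≤ N) (hn : n ≤ N) :
    rahmanP N t u v w m n x y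
      = ∑ i ∈ range (N+1), ∑ j ∈ range (N+1), ∑ k ∈ range (N+1), ∑ l ∈ range (N+1),
          rterm N t u v w m n x y i j k l := by
  have h0 : rahmanP N t u v w m n x y
      = ∑ i ∈ range (m+1), ∑ j ∈ range (m+1-i), ∑ k ∈ range (n+1), ∑ l ∈ range (n+1-k),
          rterm N t u v w m n x y i j k l := rfl
  rw [h0]
  have hinner : ∀ i j : ℕ,
      (∑ k ∈ range (n+1), ∑ l ∈ range (n+1-k), rterm N t u v w m n x y i j k l)
        = ∑ k ∈ range (N+1), ∑ l ∈ range (N+1), rterm N t u v w m n x y i j k l := by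
    intro i j
    exact sq_of_tri hn _ (fun k l hkl => rterm_zero_right hkl)
  calc ∑ i ∈ range (m+1), ∑ j ∈ range (m+1-i), ∑ k ∈ range (n+1), ∑ l ∈ range (n+1-k),
          rterm N t u v w m n x y i j k l
      = ∑ i ∈ range (m+1), ∑ j ∈ range (m+1-i), ∑ k ∈ range (N+1), ∑ l ∈ range (N+1),
          rterm N t u v w m n x y i j k l := by
        refine Finset.sum_congr rfl fun i _ => Finset.sum_congr rfl fun j _ => hinner i j
    _ = ∑ i ∈ range (N+1), ∑ j ∈ range (N+1), ∑ k ∈ range (N+1), ∑ l ∈ range (N+1),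
          rterm N t u v w m n x y i j k l := by
        refine sq_of_tri hm _ (fun i j hij => ?_)
        refine Finset.sum_eq_zero fun k _ => Finset.sum_eq_zero fun l _ => ?_
        exact rterm_zero_left hij

noncomputable def mterm (N : ℕ) (t u v w σ τ : ℝ) (x y i j k l : ℕ) : ℝ :=
  poch (-(x : ℝ)) (i + k) * poch (-(y : ℝ)) (j + l) /
      ((i.factorial : ℝ) * (j.factorial : ℝ) * (k.factorial : ℝ) * (l.factorial : ℝ)) *
    t ^ i * u ^ j * v ^ k * w ^ l * σ ^ (i + j) * τ ^ (k + l) *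
    (1 + σ + τ) ^ (N - (i + j) - (k + l))

lemma mterm_zero_x {N : ℕ} {t u v w σ τ : ℝ} {x y i j k l : ℕ} (h : x < i + k) :
    mterm N t u v w σ τ x y i j k l = 0 := by
  unfold mterm; rw [poch_eq_zero h]; ring

lemma mterm_zero_y {N : ℕ} {t u v w σ τ : ℝ} {x y i j k l : ℕ} (h : y < j + l) :
    mterm N t u v w σ τ x y i j k l = 0 := by
  unfold mterm; rw [poch_eq_zero h]; ring

set_option maxHeartbeats 1000000 in
lemma GF_left (N : ℕ) (t u v w : ℝ) {x y : ℕ} (hxy : x + y ≤ N) (σ τ : ℝ) :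
    ∑ m ∈ range (N+1), ∑ n ∈ range (N+1-m),
      tc N m n * rahmanP N t u v w m n x y * σ^m * τ^n
    = ∑ i ∈ range (N+1), ∑ j ∈ range (N+1), ∑ k ∈ range (N+1), ∑ l ∈ range (N+1),
        mterm N t u v w σ τ x y i j k l := by
  -- replace rahmanP by its extended-square form and distribute
  have step1 : ∑ m ∈ range (N+1), ∑ n ∈ range (N+1-m),
      tc N m n * rahmanP N t u v w m n x y * σ^m * τ^n
      = ∑ m ∈ range (N+1), ∑ n ∈ range (N+1-m),
          ∑ i ∈ range (N+1), ∑ j ∈ range (N+1), ∑ k ∈ range (N+1), ∑ l ∈ range (N+1),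
            tc N m n * rterm N t u v w m n x y i j k l * σ^m * τ^n := by
    refine Finset.sum_congr rfl fun m hm => Finset.sum_congr rfl fun n hn => ?_
    have hm' : m ≤ N := by simpa [Nat.lt_succ_iff] using hm
    have hn' : n ≤ N := by
      have := Finset.mem_range.1 hn; omega
    rw [rahman_ext N t u v w x y hm' hn']
    simp only [Finset.mul_sum, Finset.sum_mul]
  rw [step1]
  rw [Finset.sum_sigma' (range (N+1)) (fun m => range (N+1-m))]
  rw [sum_comm5]
  refine Finset.sum_congr rfl fun i _ => Finset.sum_congr rfl fun j _ =>
    Finset.sum_congr rfl fun k _ => Finset.sum_congr rfl fun l _ => ?_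
  -- now the inner sum over (m,n)
  rw [Finset.sum_sigma]
  have rearr : ∀ m n : ℕ,
      tc N m n * rterm N t u v w m n x y i j k l * σ^m * τ^n
      = (poch (-(x : ℝ)) (i + k) * poch (-(y : ℝ)) (j + l) /
          ((i.factorial : ℝ) * (j.factorial : ℝ) * (k.factorial : ℝ) * (l.factorial : ℝ) *
            poch (-(N : ℝ)) (i + j + k + l)) *
          t ^ i * u ^ j * v ^ k * w ^ l) *
        (tc N m n * poch (-(m:ℝ)) (i+j) * poch (-(n:ℝ)) (k+l) * σ^m * τ^n) := by
    intro m n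
    unfold rterm
    ring
  calc ∑ m ∈ range (N+1), ∑ n ∈ range (N+1-m),
        tc N m n * rterm N t u v w m n x y i j k l * σ^m * τ^n
      = ∑ m ∈ range (N+1), ∑ n ∈ range (N+1-m),
          (poch (-(x : ℝ)) (i + k) * poch (-(y : ℝ)) (j + l) /
            ((i.factorial : ℝ) * (j.factorial : ℝ) * (k.factorial : ℝ) * (l.factorial : ℝ) *
              poch (-(N : ℝ)) (i + j + k + l)) *
            t ^ i * u ^ j * v ^ k * w ^ l) *
          (tc N m n * poch (-(m:ℝ)) (i+j) * poch (-(n:ℝ)) (k+l) * σ^m * τ^n) := by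
        exact Finset.sum_congr rfl fun m _ => Finset.sum_congr rfl fun n _ => rearr m n
    _ = (poch (-(x : ℝ)) (i + k) * poch (-(y : ℝ)) (j + l) /
            ((i.factorial : ℝ) * (j.factorial : ℝ) * (k.factorial : ℝ) * (l.factorial : ℝ) *
              poch (-(N : ℝ)) (i + j + k + l)) *
            t ^ i * u ^ j * v ^ k * w ^ l) *
          (∑ m ∈ range (N+1), ∑ n ∈ range (N+1-m),
            tc N m n * poch (-(m:ℝ)) (i+j) * poch (-(n:ℝ)) (k+l) * σ^m * τ^n) := by
        rw [Finset.mul_sum]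
        exact Finset.sum_congr rfl fun m _ => (Finset.mul_sum _ _ _).symm
    _ = mterm N t u v w σ τ x y i j k l := by
        by_cases hab : (i+j) + (k+l) ≤ N
        · rw [T_eval hab]
          have hNne : poch (-(N:ℝ)) (i+j+k+l) ≠ 0 := by
            apply poch_ne_zero; omega
          have hNrw : i + j + k + l = (i+j) + (k+l) := by omega
          unfold mterm
          rw [hNrw] at hNne ⊢
          field_simp
        · rw [T_zero (by omega), mul_zero]
          rcases (show x < i + k ∨ y < j + l by omega) with h | h
          · exact (mterm_zero_x h).symm
          · exact (mterm_zero_y h).symm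

set_option maxHeartbeats 1000000 in
lemma GF_right (N : ℕ) (t u v w : ℝ) {x y : ℕ} (hxy : x + y ≤ N) (σ τ : ℝ) :
    (1+σ+τ)^(N-x-y) * (1+(1-t)*σ+(1-v)*τ)^x * (1+(1-u)*σ+(1-w)*τ)^y
    = ∑ i ∈ range (N+1), ∑ j ∈ range (N+1), ∑ k ∈ range (N+1), ∑ l ∈ range (N+1),
        mterm N t u v w σ τ x y i j k l := by
  have hx : x ≤ N := by omega
  have hy : y ≤ N := by omega
  have hsq : ∑ i ∈ range (N+1), ∑ j ∈ range (N+1), ∑ k ∈ range (N+1), ∑ l ∈ range (N+1),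
        mterm N t u v w σ τ x y i j k l
      = ∑ j ∈ range (y+1), ∑ l ∈ range (y+1-j), ∑ i ∈ range (x+1), ∑ k ∈ range (x+1-i),
        mterm N t u v w σ τ x y i j k l := by
    calc ∑ i ∈ range (N+1), ∑ j ∈ range (N+1), ∑ k ∈ range (N+1), ∑ l ∈ range (N+1),
          mterm N t u v w σ τ x y i j k l
        = ∑ j ∈ range (N+1), ∑ i ∈ range (N+1), ∑ k ∈ range (N+1), ∑ l ∈ range (N+1),
          mterm N t u v w σ τ x y i j k l := Finset.sum_comm
      _ = ∑ j ∈ range (N+1), ∑ i ∈ range (N+1), ∑ l ∈ range (N+1), ∑ k ∈ range (N+1),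
          mterm N t u v w σ τ x y i j k l := by
          exact Finset.sum_congr rfl fun j _ => Finset.sum_congr rfl fun i _ => Finset.sum_comm
      _ = ∑ j ∈ range (N+1), ∑ l ∈ range (N+1), ∑ i ∈ range (N+1), ∑ k ∈ range (N+1),
          mterm N t u v w σ τ x y i j k l := by
          exact Finset.sum_congr rfl fun j _ => Finset.sum_comm
      _ = ∑ j ∈ range (y+1), ∑ l ∈ range (y+1-j), ∑ i ∈ range (N+1), ∑ k ∈ range (N+1),
          mterm N t u v w σ τ x y i j k l := by
          refine (sq_of_tri hy _ (fun j l hjl => ?_)).symm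
          exact Finset.sum_eq_zero fun i _ => Finset.sum_eq_zero fun k _ => mterm_zero_y hjl
      _ = ∑ j ∈ range (y+1), ∑ l ∈ range (y+1-j), ∑ i ∈ range (x+1), ∑ k ∈ range (x+1-i),
          mterm N t u v w σ τ x y i j k l := by
          refine Finset.sum_congr rfl fun j _ => Finset.sum_congr rfl fun l _ => ?_
          exact (sq_of_tri hx _ (fun i k hik => mterm_zero_x hik)).symm
  rw [hsq]
  rw [show (1+(1-t)*σ+(1-v)*τ) = (-t*σ) + (-v*τ) + (1+σ+τ) by ring,
      show (1+(1-u)*σ+(1-w)*τ) = (-u*σ) + (-w*τ) + (1+σ+τ) by ring,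
      ← trinom_thm x (-t*σ) (-v*τ) (1+σ+τ), ← trinom_thm y (-u*σ) (-w*τ) (1+σ+τ)]
  simp only [Finset.mul_sum, Finset.sum_mul]
  refine Finset.sum_congr rfl fun j hj => Finset.sum_congr rfl fun l hl =>
    Finset.sum_congr rfl fun i hi => Finset.sum_congr rfl fun k hk => ?_
  have hik : i + k ≤ x := by
    have h1 := Finset.mem_range.1 hi
    have h2 := Finset.mem_range.1 hk
    omega
  have hjl : j + l ≤ y := by
    have h1 := Finset.mem_range.1 hj
    have h2 := Finset.mem_range.1 hl
    omega
  unfold mterm tc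
  rw [poch_eq hik, poch_eq hjl,
      show x - (i+k) = x - i - k by omega, show y - (j+l) = y - j - l by omega,
      show N - (i+j) - (k+l) = (N-x-y) + ((x-i-k) + (y-j-l)) by omega,
      pow_add, pow_add]
  have e1 : ((i.factorial : ℝ)) ≠ 0 := Nat.cast_ne_zero.2 i.factorial_pos.ne'
  have e2 : ((j.factorial : ℝ)) ≠ 0 := Nat.cast_ne_zero.2 j.factorial_pos.ne'
  have e3 : ((k.factorial : ℝ)) ≠ 0 := Nat.cast_ne_zero.2 k.factorial_pos.ne'
  have e4 : ((l.factorial : ℝ)) ≠ 0 := Nat.cast_ne_zero.2 l.factorial_pos.ne'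
  have e5 : (((x-i-k).factorial : ℝ)) ≠ 0 := Nat.cast_ne_zero.2 (x-i-k).factorial_pos.ne'
  have e6 : (((y-j-l).factorial : ℝ)) ≠ 0 := Nat.cast_ne_zero.2 (y-j-l).factorial_pos.ne'
  field_simp
  ring

lemma GF (N : ℕ) (t u v w : ℝ) {x y : ℕ} (hxy : x + y ≤ N) (σ τ : ℝ) :
    ∑ m ∈ range (N+1), ∑ n ∈ range (N+1-m),
      tc N m n * rahmanP N t u v w m n x y * σ^m * τ^n
    = (1+σ+τ)^(N-x-y) * (1+(1-t)*σ+(1-v)*τ)^x * (1+(1-u)*σ+(1-w)*τ)^y := by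
  rw [GF_left N t u v w hxy σ τ, GF_right N t u v w hxy σ τ]

lemma SUM (N : ℕ) (t u v w η1 η2 σ τ σ' τ' : ℝ) :
    ∑ x ∈ range (N+1), ∑ y ∈ range (N+1-x), trinomPMF N x y η1 η2 *
      ((1+σ+τ)^(N-x-y) * (1+(1-t)*σ+(1-v)*τ)^x * (1+(1-u)*σ+(1-w)*τ)^y) *
      ((1+σ'+τ')^(N-x-y) * (1+(1-t)*σ'+(1-v)*τ')^x * (1+(1-u)*σ'+(1-w)*τ')^y)
    = ((η1*((1+(1-t)*σ+(1-v)*τ)*(1+(1-t)*σ'+(1-v)*τ'))) +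
        (η2*((1+(1-u)*σ+(1-w)*τ)*(1+(1-u)*σ'+(1-w)*τ'))) +
        ((1-η1-η2)*((1+σ+τ)*(1+σ'+τ'))))^N := by
  rw [← trinom_thm N (η1*((1+(1-t)*σ+(1-v)*τ)*(1+(1-t)*σ'+(1-v)*τ')))
      (η2*((1+(1-u)*σ+(1-w)*τ)*(1+(1-u)*σ'+(1-w)*τ')))
      ((1-η1-η2)*((1+σ+τ)*(1+σ'+τ')))]
  refine Finset.sum_congr rfl fun x _ => Finset.sum_congr rfl fun y _ => ?_
  unfold trinomPMF tc
  simp only [mul_pow]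
  ring

noncomputable def quadPoly (K : ℕ) (c : ℕ → ℕ → ℕ → ℕ → ℝ) : MvPolynomial (Fin 4) ℝ :=
  ∑ m ∈ range K, ∑ n ∈ range K, ∑ m' ∈ range K, ∑ n' ∈ range K,
    MvPolynomial.monomial (Finsupp.equivFunOnFinite.symm ![m, n, m', n']) (c m n m' n')

lemma quadPoly_eval (K : ℕ) (c : ℕ → ℕ → ℕ → ℕ → ℝ) (z : Fin 4 → ℝ) :
    MvPolynomial.eval z (quadPoly K c)
      = ∑ m ∈ range K, ∑ n ∈ range K, ∑ m' ∈ range K, ∑ n' ∈ range K,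
          c m n m' n' * (z 0)^m * (z 1)^n * (z 2)^m' * (z 3)^n' := by
  unfold quadPoly
  rw [map_sum]
  refine Finset.sum_congr rfl fun m _ => ?_
  rw [map_sum]
  refine Finset.sum_congr rfl fun n _ => ?_
  rw [map_sum]
  refine Finset.sum_congr rfl fun m' _ => ?_
  rw [map_sum]
  refine Finset.sum_congr rfl fun n' _ => ?_
  rw [MvPolynomial.eval_monomial]
  rw [Finsupp.prod_fintype _ _ (fun i => pow_zero (z i))]
  rw [Fin.prod_univ_four]
  show c m n m' n' * (z 0 ^ m * z 1 ^ n * z 2 ^ m' * z 3 ^ n') = _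
  ring

lemma quadPoly_coeff (K : ℕ) (c : ℕ → ℕ → ℕ → ℕ → ℝ) {m n m' n' : ℕ}
    (hm : m < K) (hn : n < K) (hm' : m' < K) (hn' : n' < K) :
    MvPolynomial.coeff (Finsupp.equivFunOnFinite.symm ![m, n, m', n']) (quadPoly K c)
      = c m n m' n' := by
  have hinj : ∀ a b a' b' : ℕ,
      (Finsupp.equivFunOnFinite.symm ![a, b, a', b'] : Fin 4 →₀ ℕ)
        = Finsupp.equivFunOnFinite.symm ![m, n, m', n'] →
      a = m ∧ b = n ∧ a' = m' ∧ b' = n' := by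
    intro a b a' b' h
    have h' : (![a, b, a', b'] : Fin 4 → ℕ) = ![m, n, m', n'] :=
      Finsupp.equivFunOnFinite.symm.injective h
    exact ⟨congrFun h' 0, congrFun h' 1, congrFun h' 2, congrFun h' 3⟩
  have hcoeff : ∀ a b a' b' : ℕ,
      MvPolynomial.coeff (Finsupp.equivFunOnFinite.symm ![m, n, m', n'])
        (MvPolynomial.monomial (Finsupp.equivFunOnFinite.symm ![a, b, a', b']) (c a b a' b'))
      = if a = m ∧ b = n ∧ a' = m' ∧ b' = n' then c a b a' b' else 0 := by
    intro a b a' b'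
    rw [MvPolynomial.coeff_monomial]
    by_cases h1 : (Finsupp.equivFunOnFinite.symm ![a, b, a', b'] : Fin 4 →₀ ℕ)
        = Finsupp.equivFunOnFinite.symm ![m, n, m', n']
    · rw [if_pos h1, if_pos (hinj a b a' b' h1)]
    · rw [if_neg h1, if_neg ?_]
      intro hc
      obtain ⟨rfl, rfl, rfl, rfl⟩ := hc
      exact h1 rfl
  unfold quadPoly
  rw [MvPolynomial.coeff_sum]
  rw [Finset.sum_eq_single_of_mem m (Finset.mem_range.2 hm) ?hz1]
  case hz1 =>
    intro a _ ha
    rw [MvPolynomial.coeff_sum]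
    refine Finset.sum_eq_zero fun b _ => ?_
    rw [MvPolynomial.coeff_sum]
    refine Finset.sum_eq_zero fun a' _ => ?_
    rw [MvPolynomial.coeff_sum]
    refine Finset.sum_eq_zero fun b' _ => ?_
    rw [hcoeff, if_neg (by tauto)]
  rw [MvPolynomial.coeff_sum]
  rw [Finset.sum_eq_single_of_mem n (Finset.mem_range.2 hn) ?hz2]
  case hz2 =>
    intro b _ hb
    rw [MvPolynomial.coeff_sum]
    refine Finset.sum_eq_zero fun a' _ => ?_
    rw [MvPolynomial.coeff_sum]
    refine Finset.sum_eq_zero fun b' _ => ?_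
    rw [hcoeff, if_neg (by tauto)]
  rw [MvPolynomial.coeff_sum]
  rw [Finset.sum_eq_single_of_mem m' (Finset.mem_range.2 hm') ?hz3]
  case hz3 =>
    intro a' _ ha'
    rw [MvPolynomial.coeff_sum]
    refine Finset.sum_eq_zero fun b' _ => ?_
    rw [hcoeff, if_neg (by tauto)]
  rw [MvPolynomial.coeff_sum]
  rw [Finset.sum_eq_single_of_mem n' (Finset.mem_range.2 hn') ?hz4]
  case hz4 =>
    intro b' _ hb'
    rw [hcoeff, if_neg (by tauto)]
  rw [hcoeff, if_pos ⟨rfl, rfl, rfl, rfl⟩]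

lemma four_var_ext (K : ℕ) (c d : ℕ → ℕ → ℕ → ℕ → ℝ)
    (h : ∀ z1 z2 z3 z4 : ℝ,
      ∑ m ∈ range K, ∑ n ∈ range K, ∑ m' ∈ range K, ∑ n' ∈ range K,
        c m n m' n' * z1^m * z2^n * z3^m' * z4^n'
      = ∑ m ∈ range K, ∑ n ∈ range K, ∑ m' ∈ range K, ∑ n' ∈ range K,
        d m n m' n' * z1^m * z2^n * z3^m' * z4^n')
    {m n m' n' : ℕ} (hm : m < K) (hn : n < K) (hm' : m' < K) (hn' : n' < K) :
    c m n m' n' = d m n m' n' := by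
  have hpoly : quadPoly K c = quadPoly K d := by
    apply MvPolynomial.funext
    intro z
    rw [quadPoly_eval, quadPoly_eval]
    exact h (z 0) (z 1) (z 2) (z 3)
  have := congrArg (MvPolynomial.coeff (Finsupp.equivFunOnFinite.symm ![m, n, m', n'])) hpoly
  rwa [quadPoly_coeff K c hm hn hm' hn', quadPoly_coeff K d hm hn hm' hn'] at this

noncomputable def Sfun (N : ℕ) (t u v w η1 η2 : ℝ) (a b a' b' : ℕ) : ℝ :=
  ∑ x ∈ range (N+1), ∑ y ∈ range (N+1-x),
    trinomPMF N x y η1 η2 * rahmanP N t u v w a b x y * rahmanP N t u v w a' b' x y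

lemma Sfun_sigma (N : ℕ) (t u v w η1 η2 : ℝ) (a b a' b' : ℕ) :
    Sfun N t u v w η1 η2 a b a' b'
      = ∑ s ∈ (range (N+1)).sigma (fun x => range (N+1-x)),
          trinomPMF N s.1 s.2 η1 η2 * rahmanP N t u v w a b s.1 s.2 *
            rahmanP N t u v w a' b' s.1 s.2 := by
  unfold Sfun
  rw [Finset.sum_sigma]

lemma GF_sigma (N : ℕ) (t u v w : ℝ) {x y : ℕ} (hxy : x + y ≤ N) (σ τ : ℝ) :
    ∑ p ∈ (range (N+1)).sigma (fun a => range (N+1-a)),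
      tc N p.1 p.2 * rahmanP N t u v w p.1 p.2 x y * σ^p.1 * τ^p.2
    = (1+σ+τ)^(N-x-y) * (1+(1-t)*σ+(1-v)*τ)^x * (1+(1-u)*σ+(1-w)*τ)^y := by
  rw [Finset.sum_sigma]
  exact GF N t u v w hxy σ τ

set_option maxHeartbeats 1000000 in
lemma EXP (N : ℕ) (t u v w η1 η2 lam1 lam2 : ℝ)
    (hkey : ∀ z1 z2 z3 z4 : ℝ,
      (η1*((1+(1-t)*z1+(1-v)*z2)*(1+(1-t)*z3+(1-v)*z4))) +
        (η2*((1+(1-u)*z1+(1-w)*z2)*(1+(1-u)*z3+(1-w)*z4))) +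
        ((1-η1-η2)*((1+z1+z2)*(1+z3+z4)))
      = 1 + lam1*(z1*z3) + lam2*(z2*z4))
    (z1 z2 z3 z4 : ℝ) :
    ∑ p ∈ (range (N+1)).sigma (fun a => range (N+1-a)),
      ∑ q ∈ (range (N+1)).sigma (fun a => range (N+1-a)),
        tc N p.1 p.2 * tc N q.1 q.2 * Sfun N t u v w η1 η2 p.1 p.2 q.1 q.2 *
          z1^p.1 * z2^p.2 * z3^q.1 * z4^q.2
    = (1 + lam1*(z1*z3) + lam2*(z2*z4))^N := by
  calc ∑ p ∈ (range (N+1)).sigma (fun a => range (N+1-a)),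
      ∑ q ∈ (range (N+1)).sigma (fun a => range (N+1-a)),
        tc N p.1 p.2 * tc N q.1 q.2 * Sfun N t u v w η1 η2 p.1 p.2 q.1 q.2 *
          z1^p.1 * z2^p.2 * z3^q.1 * z4^q.2
      = ∑ p ∈ (range (N+1)).sigma (fun a => range (N+1-a)),
          ∑ q ∈ (range (N+1)).sigma (fun a => range (N+1-a)),
            ∑ s ∈ (range (N+1)).sigma (fun x => range (N+1-x)),
              trinomPMF N s.1 s.2 η1 η2 *
                (tc N p.1 p.2 * rahmanP N t u v w p.1 p.2 s.1 s.2 * z1^p.1 * z2^p.2) *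
                (tc N q.1 q.2 * rahmanP N t u v w q.1 q.2 s.1 s.2 * z3^q.1 * z4^q.2) := by
        refine Finset.sum_congr rfl fun p _ => Finset.sum_congr rfl fun q _ => ?_
        rw [Sfun_sigma]
        simp only [Finset.mul_sum, Finset.sum_mul]
        exact Finset.sum_congr rfl fun s _ => by ring
    _ = ∑ s ∈ (range (N+1)).sigma (fun x => range (N+1-x)),
          ∑ p ∈ (range (N+1)).sigma (fun a => range (N+1-a)),
            ∑ q ∈ (range (N+1)).sigma (fun a => range (N+1-a)),
              trinomPMF N s.1 s.2 η1 η2 *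
                (tc N p.1 p.2 * rahmanP N t u v w p.1 p.2 s.1 s.2 * z1^p.1 * z2^p.2) *
                (tc N q.1 q.2 * rahmanP N t u v w q.1 q.2 s.1 s.2 * z3^q.1 * z4^q.2) := by
        refine Eq.trans (Finset.sum_congr rfl fun p _ => Finset.sum_comm) Finset.sum_comm
    _ = ∑ s ∈ (range (N+1)).sigma (fun x => range (N+1-x)),
          trinomPMF N s.1 s.2 η1 η2 *
            ((1+z1+z2)^(N-s.1-s.2) * (1+(1-t)*z1+(1-v)*z2)^s.1 * (1+(1-u)*z1+(1-w)*z2)^s.2) *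
            ((1+z3+z4)^(N-s.1-s.2) * (1+(1-t)*z3+(1-v)*z4)^s.1 * (1+(1-u)*z3+(1-w)*z4)^s.2) := by
        refine Finset.sum_congr rfl fun s hs => ?_
        have hs' : s.1 + s.2 ≤ N := by
          rcases Finset.mem_sigma.1 hs with ⟨h1, h2⟩
          have := Finset.mem_range.1 h1
          have := Finset.mem_range.1 h2
          omega
        rw [← GF_sigma N t u v w hs' z1 z2, ← GF_sigma N t u v w hs' z3 z4]
        rw [mul_assoc, Finset.sum_mul_sum]
        rw [Finset.mul_sum]
        refine Eq.symm ?_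
        refine Finset.sum_congr rfl fun p _ => ?_
        rw [Finset.mul_sum]
        exact Finset.sum_congr rfl fun q _ => by ring
    _ = (1 + lam1*(z1*z3) + lam2*(z2*z4))^N := by
        rw [Finset.sum_sigma]
        rw [SUM N t u v w η1 η2 z1 z2 z3 z4]
        exact congrArg (fun r => r^N) (hkey z1 z2 z3 z4)

noncomputable def cfun (N : ℕ) (t u v w η1 η2 : ℝ) (a b a' b' : ℕ) : ℝ :=
  if a + b ≤ N ∧ a' + b' ≤ N then
    tc N a b * tc N a' b' * Sfun N t u v w η1 η2 a b a' b' else 0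

noncomputable def dfun (N : ℕ) (l1 l2 : ℝ) (a b a' b' : ℕ) : ℝ :=
  if a = a' ∧ b = b' ∧ a + b ≤ N then tc N a b * l1^a * l2^b else 0

set_option maxHeartbeats 1000000 in
lemma Qc_eq (N : ℕ) (t u v w η1 η2 z1 z2 z3 z4 : ℝ) :
    ∑ a ∈ range (N+1), ∑ b ∈ range (N+1), ∑ a' ∈ range (N+1), ∑ b' ∈ range (N+1),
      cfun N t u v w η1 η2 a b a' b' * z1^a * z2^b * z3^a' * z4^b'
    = ∑ p ∈ (range (N+1)).sigma (fun a => range (N+1-a)),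
        ∑ q ∈ (range (N+1)).sigma (fun a => range (N+1-a)),
          tc N p.1 p.2 * tc N q.1 q.2 * Sfun N t u v w η1 η2 p.1 p.2 q.1 q.2 *
            z1^p.1 * z2^p.2 * z3^q.1 * z4^q.2 := by
  calc ∑ a ∈ range (N+1), ∑ b ∈ range (N+1), ∑ a' ∈ range (N+1), ∑ b' ∈ range (N+1),
      cfun N t u v w η1 η2 a b a' b' * z1^a * z2^b * z3^a' * z4^b'
      = ∑ a ∈ range (N+1), ∑ b ∈ range (N+1), (if a + b ≤ N then
          (∑ a' ∈ range (N+1), ∑ b' ∈ range (N+1), (if a' + b' ≤ N then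
            tc N a b * tc N a' b' * Sfun N t u v w η1 η2 a b a' b' *
              z1^a * z2^b * z3^a' * z4^b' else 0)) else 0) := by
        refine Finset.sum_congr rfl fun a _ => Finset.sum_congr rfl fun b _ => ?_
        by_cases hab : a + b ≤ N
        · rw [if_pos hab]
          refine Finset.sum_congr rfl fun a' _ => Finset.sum_congr rfl fun b' _ => ?_
          unfold cfun
          by_cases hab' : a' + b' ≤ N
          · rw [if_pos (⟨hab, hab'⟩ : a + b ≤ N ∧ a' + b' ≤ N), if_pos hab']
          · rw [if_neg (by tauto), if_neg hab']
            ring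
        · rw [if_neg hab]
          refine Finset.sum_eq_zero fun a' _ => Finset.sum_eq_zero fun b' _ => ?_
          unfold cfun
          rw [if_neg (by tauto)]
          ring
    _ = ∑ a ∈ range (N+1), ∑ b ∈ range (N+1-a),
          (∑ a' ∈ range (N+1), ∑ b' ∈ range (N+1), (if a' + b' ≤ N then
            tc N a b * tc N a' b' * Sfun N t u v w η1 η2 a b a' b' *
              z1^a * z2^b * z3^a' * z4^b' else 0)) := by
        exact tri_sq (le_refl N) (le_refl N) _
    _ = ∑ a ∈ range (N+1), ∑ b ∈ range (N+1-a),
          ∑ a' ∈ range (N+1), ∑ b' ∈ range (N+1-a'),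
            tc N a b * tc N a' b' * Sfun N t u v w η1 η2 a b a' b' *
              z1^a * z2^b * z3^a' * z4^b' := by
        refine Finset.sum_congr rfl fun a _ => Finset.sum_congr rfl fun b _ => ?_
        exact tri_sq (le_refl N) (le_refl N) _
    _ = ∑ p ∈ (range (N+1)).sigma (fun a => range (N+1-a)),
        ∑ q ∈ (range (N+1)).sigma (fun a => range (N+1-a)),
          tc N p.1 p.2 * tc N q.1 q.2 * Sfun N t u v w η1 η2 p.1 p.2 q.1 q.2 *
            z1^p.1 * z2^p.2 * z3^q.1 * z4^q.2 := by
        rw [Finset.sum_sigma]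
        refine Finset.sum_congr rfl fun a _ => ?_
        refine Finset.sum_congr rfl fun b _ => ?_
        rw [Finset.sum_sigma]

set_option maxHeartbeats 1000000 in
lemma Qd_eq (N : ℕ) (l1 l2 z1 z2 z3 z4 : ℝ) :
    (1 + l1*(z1*z3) + l2*(z2*z4))^N
    = ∑ a ∈ range (N+1), ∑ b ∈ range (N+1), ∑ a' ∈ range (N+1), ∑ b' ∈ range (N+1),
        dfun N l1 l2 a b a' b' * z1^a * z2^b * z3^a' * z4^b' := by
  rw [show 1 + l1*(z1*z3) + l2*(z2*z4) = l1*(z1*z3) + l2*(z2*z4) + 1 from by ring]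
  rw [← trinom_thm N (l1*(z1*z3)) (l2*(z2*z4)) 1]
  rw [← tri_sq (le_refl N) (le_refl N)
      (fun a b => tc N a b * (l1*(z1*z3))^a * (l2*(z2*z4))^b * (1:ℝ)^(N-a-b))]
  refine Finset.sum_congr rfl fun a ha => Finset.sum_congr rfl fun b hb => ?_
  rw [Finset.sum_eq_single_of_mem a ha ?ha0]
  case ha0 =>
    intro a2 _ hne2
    refine Finset.sum_eq_zero fun b' _ => ?_
    unfold dfun
    rw [if_neg (fun h => hne2 h.1.symm)]
    ring
  rw [Finset.sum_eq_single_of_mem b hb ?hb0]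
  case hb0 =>
    intro b2 _ hne2
    unfold dfun
    rw [if_neg (fun h => hne2 h.2.1.symm)]
    ring
  unfold dfun
  by_cases hab : a + b ≤ N
  · rw [if_pos hab, if_pos (⟨rfl, rfl, hab⟩ : a = a ∧ b = b ∧ a + b ≤ N)]
    simp only [mul_pow, one_pow]
    ring
  · rw [if_neg hab, if_neg (by tauto)]
    ring

lemma main_general (N : ℕ) (t u v w η1 η2 : ℝ)
    (hE1 : (1-η1-η2) + η1*(1-t) + η2*(1-u) = 0)
    (hE2 : (1-η1-η2) + η1*(1-v) + η2*(1-w) = 0)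
    (hE3 : (1-η1-η2) + η1*(1-t)*(1-v) + η2*(1-u)*(1-w) = 0)
    (m n m' n' : ℕ) (hmn : m + n ≤ N) (hmn' : m' + n' ≤ N)
    (hne : ¬(m = m' ∧ n = n')) :
    Sfun N t u v w η1 η2 m n m' n' = 0 := by
  have hkey : ∀ z1 z2 z3 z4 : ℝ,
      (η1*((1+(1-t)*z1+(1-v)*z2)*(1+(1-t)*z3+(1-v)*z4))) +
        (η2*((1+(1-u)*z1+(1-w)*z2)*(1+(1-u)*z3+(1-w)*z4))) +
        ((1-η1-η2)*((1+z1+z2)*(1+z3+z4)))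
      = 1 + (η1*(1-t)^2 + η2*(1-u)^2 + (1-η1-η2))*(z1*z3)
          + (η1*(1-v)^2 + η2*(1-w)^2 + (1-η1-η2))*(z2*z4) := by
    intro z1 z2 z3 z4
    linear_combination (z1+z3)*hE1 + (z2+z4)*hE2 + (z1*z4+z2*z3)*hE3
  have h4 : ∀ z1 z2 z3 z4 : ℝ,
      ∑ a ∈ range (N+1), ∑ b ∈ range (N+1), ∑ a' ∈ range (N+1), ∑ b' ∈ range (N+1),
        cfun N t u v w η1 η2 a b a' b' * z1^a * z2^b * z3^a' * z4^b'
      = ∑ a ∈ range (N+1), ∑ b ∈ range (N+1), ∑ a' ∈ range (N+1), ∑ b' ∈ range (N+1),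
        dfun N (η1*(1-t)^2 + η2*(1-u)^2 + (1-η1-η2)) (η1*(1-v)^2 + η2*(1-w)^2 + (1-η1-η2))
          a b a' b' * z1^a * z2^b * z3^a' * z4^b' := by
    intro z1 z2 z3 z4
    rw [Qc_eq N t u v w η1 η2 z1 z2 z3 z4]
    rw [EXP N t u v w η1 η2 _ _ hkey z1 z2 z3 z4]
    exact Qd_eq N _ _ z1 z2 z3 z4
  have hext := four_var_ext (N+1) (cfun N t u v w η1 η2)
      (dfun N (η1*(1-t)^2 + η2*(1-u)^2 + (1-η1-η2)) (η1*(1-v)^2 + η2*(1-w)^2 + (1-η1-η2)))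
      h4 (m := m) (n := n) (m' := m') (n' := n')
      (by omega) (by omega) (by omega) (by omega)
  unfold cfun dfun at hext
  rw [if_pos (⟨hmn, hmn'⟩ : m + n ≤ N ∧ m' + n' ≤ N), if_neg (by tauto)] at hext
  have hne0 : tc N m n * tc N m' n' ≠ 0 :=
    mul_ne_zero (tc_pos N m n).ne' (tc_pos N m' n').ne'
  rcases mul_eq_zero.mp hext with h | h
  · exact absurd h hne0
  · exact h

/-- the Rahman polynomials are orthogonal with respect to the
trinomial distribution `b₂(x, y, N; η₁, η₂)`. -/
theorem rahman_orthogonality (p1 p2 p3 p4 : ℝ)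
    (h1 : 0 < p1) (h2 : 0 < p2) (h3 : 0 < p3) (h4 : 0 < p4)
    (hD : p1 * p4 ≠ p2 * p3)
    (N : ℕ) (hN : 1 ≤ N)
    (t u v w η1 η2 : ℝ)
    (ht : t = (p1 + p2) * (p1 + p3) / (p1 * (p1 + p2 + p3 + p4)))
    (hu : u = (p1 + p3) * (p3 + p4) / (p3 * (p1 + p2 + p3 + p4)))
    (hv : v = (p1 + p2) * (p2 + p4) / (p2 * (p1 + p2 + p3 + p4)))
    (hw : w = (p2 + p4) * (p3 + p4) / (p4 * (p1 + p2 + p3 + p4)))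
    (hη1 : η1 = p1 * p2 * (p1 + p2 + p3 + p4) / ((p1 + p2) * (p1 + p3) * (p2 + p4)))
    (hη2 : η2 = p3 * p4 * (p1 + p2 + p3 + p4) / ((p1 + p3) * (p2 + p4) * (p3 + p4)))
    (m n m' n' : ℕ) (hmn : m + n ≤ N) (hmn' : m' + n' ≤ N)
    (hne : (m, n) ≠ (m', n')) :
    ∑ x ∈ range (N + 1), ∑ y ∈ range (N + 1 - x),
      trinomPMF N x y η1 η2 * rahmanP N t u v w m n x y * rahmanP N t u v w m' n' x y
      = 0 := by
  have hp1 : p1 ≠ 0 := h1.ne'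
  have hp2 : p2 ≠ 0 := h2.ne'
  have hp3 : p3 ≠ 0 := h3.ne'
  have hp4 : p4 ≠ 0 := h4.ne'
  have hp12 : p1 + p2 ≠ 0 := by positivity
  have hp13 : p1 + p3 ≠ 0 := by positivity
  have hp24 : p2 + p4 ≠ 0 := by positivity
  have hp34 : p3 + p4 ≠ 0 := by positivity
  have hpS : p1 + p2 + p3 + p4 ≠ 0 := by positivity
  have hE1 : (1-η1-η2) + η1*(1-t) + η2*(1-u) = 0 := by
    rw [ht, hu, hη1, hη2]
    field_simp
    ring
  have hE2 : (1-η1-η2) + η1*(1-v) + η2*(1-w) = 0 := by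
    rw [hv, hw, hη1, hη2]
    field_simp
    ring
  have hE3 : (1-η1-η2) + η1*(1-t)*(1-v) + η2*(1-u)*(1-w) = 0 := by
    rw [ht, hu, hv, hw, hη1, hη2]
    field_simp
    ring
  have hne' : ¬(m = m' ∧ n = n') := by
    rintro ⟨rfl, rfl⟩
    exact hne rfl
  exact main_general N t u v w η1 η2 hE1 hE2 hE3 m n m' n' hmn hmn' hne'
end
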